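/- Let n ≥ 3 and let a, c ∈ ℂ with a² − c² ≠ 0 and a + c ≠ 1. For 1 ≤ i ≤ n−1, let P_i ∈ M_n(ℂ) be the matrix with (i,i+1)-entry 1, (i+1,i)-entry 1, (k,k)-entry 1 for every k ∉ {i,i+1}, and all other entries 0, and let N_i ∈ M_n(ℂ) be the matrix with (i,i)- and (i+1,i+1)-entries a, (i,i+1)- and (i+1,i)-entries c, (k,k)-entry 1 for every k ∉ {i,i+1}, and all other entries 0. Then the only ℂ-subspaces W of ℂⁿ satisfying P_i·W ⊆ W and N_i·W ⊆ W for all 1 ≤ i ≤ n−1 are {0} and ℂⁿ; that is, the extension ρ'_S of the standard representation to SB_n at t = 1 is irreducible when a + c ≠ 1. -/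
import Mathlib


open Matrix

/-- The image of the braid generator under the standard (Tong–Yang–Ma)
representation (0-indexed `i`): `(i,i+1)`-entry `t`, `(i+1,i)`-entry `1`,
diagonal entries `1` outside `{i, i+1}`, all other entries `0`. -/
def stdS (n : ℕ) {R : Type*} [CommRing R] (t : R) (i : ℕ) : Matrix (Fin n) (Fin n) R :=
  Matrix.of fun k l =>
    if (k : ℕ) = i ∧ (l : ℕ) = i + 1 then t
    else if (k : ℕ) = i + 1 ∧ (l : ℕ) = i then 1
    else if k = l ∧ (k : ℕ) ≠ i ∧ (k : ℕ) ≠ i + 1 then 1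
    else 0

/-- The image of the singular generator (0-indexed `i`): `(i,i)`- and
`(i+1,i+1)`-entries `a`, `(i,i+1)`-entry `c*t`, `(i+1,i)`-entry `c`,
diagonal entries `1` outside `{i, i+1}`, all other entries `0`. -/
def stdN (n : ℕ) {R : Type*} [CommRing R] (a c t : R) (i : ℕ) : Matrix (Fin n) (Fin n) R :=
  Matrix.of fun k l =>
    if (k : ℕ) = i ∧ (l : ℕ) = i then a
    else if (k : ℕ) = i + 1 ∧ (l : ℕ) = i + 1 then a
    else if (k : ℕ) = i ∧ (l : ℕ) = i + 1 then c * t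
    else if (k : ℕ) = i + 1 ∧ (l : ℕ) = i then c
    else if k = l then 1
    else 0

lemma stdS_mulVec {n : ℕ} (i : ℕ) (hi : i + 1 < n) (w : Fin n → ℂ) (k : Fin n) :
    (stdS n (1:ℂ) i).mulVec w k =
      if (k:ℕ) = i then w ⟨i+1, hi⟩
      else if (k:ℕ) = i+1 then w ⟨i, Nat.lt_of_succ_lt hi⟩
      else w k := by
  classical
  simp only [mulVec, dotProduct]
  by_cases hk : (k:ℕ) = i
  · rw [if_pos hk, Finset.sum_eq_single (⟨i+1, hi⟩ : Fin n)]
    · simp [stdS, hk]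
    · intro l _ hl
      have hl' : (l:ℕ) ≠ i + 1 := fun h => hl (Fin.ext h)
      simp only [stdS, of_apply]
      split_ifs <;> simp_all <;> omega
    · simp
  · by_cases hk1 : (k:ℕ) = i + 1
    · rw [if_neg hk, if_pos hk1, Finset.sum_eq_single (⟨i, Nat.lt_of_succ_lt hi⟩ : Fin n)]
      · simp [stdS, hk1]
      · intro l _ hl
        have hl' : (l:ℕ) ≠ i := fun h => hl (Fin.ext h)
        simp only [stdS, of_apply]
        split_ifs <;> simp_all <;> omega
      · simp
    · rw [if_neg hk, if_neg hk1, Finset.sum_eq_single k]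
      · simp [stdS, hk, hk1]
      · intro l _ hl
        simp only [stdS, of_apply]
        split_ifs <;> first | (exfalso; omega) | simp_all | (exfalso; exact hl (Fin.ext (by omega)))
      · simp

lemma stdN_mulVec {n : ℕ} (a c : ℂ) (i : ℕ) (hi : i + 1 < n) (w : Fin n → ℂ) (k : Fin n) :
    (stdN n a c (1:ℂ) i).mulVec w k =
      if (k:ℕ) = i then a * w ⟨i, Nat.lt_of_succ_lt hi⟩ + c * w ⟨i+1, hi⟩
      else if (k:ℕ) = i+1 then c * w ⟨i, Nat.lt_of_succ_lt hi⟩ + a * w ⟨i+1, hi⟩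
      else w k := by
  classical
  simp only [mulVec, dotProduct]
  by_cases hk : (k:ℕ) = i
  · rw [if_pos hk]
    have : ∀ l : Fin n, stdN n a c (1:ℂ) i k l * w l =
        (if l = (⟨i, Nat.lt_of_succ_lt hi⟩ : Fin n) then a * w l else 0) +
        (if l = (⟨i+1, hi⟩ : Fin n) then c * w l else 0) := by
      intro l
      simp only [stdN, of_apply, Fin.ext_iff]
      split_ifs <;> simp_all <;> ring_nf <;> omega
    simp only [this, Finset.sum_add_distrib, Finset.sum_ite_eq', Finset.mem_univ, if_pos]
  · by_cases hk1 : (k:ℕ) = i + 1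
    · rw [if_neg hk, if_pos hk1]
      have : ∀ l : Fin n, stdN n a c (1:ℂ) i k l * w l =
          (if l = (⟨i, Nat.lt_of_succ_lt hi⟩ : Fin n) then c * w l else 0) +
          (if l = (⟨i+1, hi⟩ : Fin n) then a * w l else 0) := by
        intro l
        simp only [stdN, of_apply, Fin.ext_iff]
        split_ifs <;> simp_all <;> ring_nf <;> omega
      simp only [this, Finset.sum_add_distrib, Finset.sum_ite_eq', Finset.mem_univ, if_pos]
    · rw [if_neg hk, if_neg hk1, Finset.sum_eq_single k]
      · simp [stdN, hk, hk1]
      · intro l _ hl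
        simp only [stdN, of_apply]
        split_ifs <;> first | (exfalso; omega) | simp_all | (exfalso; exact hl (Fin.ext (by omega)))
      · simp

/-- indicator of `{i, i+1}` -/
def bsv (n i : ℕ) : Fin n → ℂ := fun k => if (k:ℕ) = i ∨ (k:ℕ) = i+1 then 1 else 0

/-- indicator of `{j}` -/
def esv (n j : ℕ) : Fin n → ℂ := fun k => if (k:ℕ) = j then 1 else 0

lemma bs_mem {n : ℕ} (a c : ℂ) (hac1 : a + c ≠ 1) (W : Submodule ℂ (Fin n → ℂ))
    (hP : ∀ i, i < n - 1 → ∀ w ∈ W, (stdS n (1 : ℂ) i).mulVec w ∈ W)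
    (hN : ∀ i, i < n - 1 → ∀ w ∈ W, (stdN n a c (1 : ℂ) i).mulVec w ∈ W)
    (w : Fin n → ℂ) (hw : w ∈ W) (i : ℕ) (hi : i + 1 < n)
    (hne : w ⟨i, Nat.lt_of_succ_lt hi⟩ + w ⟨i+1, hi⟩ ≠ 0) : bsv n i ∈ W := by
  have hi' : i < n - 1 := by omega
  have hx1 : (stdN n a c 1 i).mulVec w ∈ W := hN i hi' w hw
  have hx2 : (stdS n 1 i).mulVec ((stdN n a c 1 i).mulVec w) ∈ W := hP i hi' _ hx1
  have hx3 : (stdS n 1 i).mulVec w ∈ W := hP i hi' w hw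
  have hu : ((stdN n a c 1 i).mulVec w + (stdS n 1 i).mulVec ((stdN n a c 1 i).mulVec w)
      - (stdS n 1 i).mulVec w - w) ∈ W := sub_mem (sub_mem (add_mem hx1 hx2) hx3) hw
  have heq : (stdN n a c 1 i).mulVec w + (stdS n 1 i).mulVec ((stdN n a c 1 i).mulVec w)
      - (stdS n 1 i).mulVec w - w
      = ((a + c - 1) * (w ⟨i, Nat.lt_of_succ_lt hi⟩ + w ⟨i+1, hi⟩)) • bsv n i := by
    funext k
    by_cases hk : (k:ℕ) = i
    · rw [show k = (⟨i, Nat.lt_of_succ_lt hi⟩ : Fin n) from Fin.ext hk]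
      simp only [Pi.add_apply, Pi.sub_apply, Pi.smul_apply, smul_eq_mul,
        stdS_mulVec i hi, stdN_mulVec a c i hi, bsv, Fin.val_mk]
      split_ifs <;> first | ring1 | (exfalso; omega) | tauto
    · by_cases hk1 : (k:ℕ) = i+1
      · rw [show k = (⟨i+1, hi⟩ : Fin n) from Fin.ext hk1]
        simp only [Pi.add_apply, Pi.sub_apply, Pi.smul_apply, smul_eq_mul,
          stdS_mulVec i hi, stdN_mulVec a c i hi, bsv, Fin.val_mk]
        split_ifs <;> first | ring1 | (exfalso; omega) | tauto
      · simp only [Pi.add_apply, Pi.sub_apply, Pi.smul_apply, smul_eq_mul,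
          stdS_mulVec i hi, stdN_mulVec a c i hi, bsv, Fin.val_mk]
        split_ifs <;> first | ring1 | (exfalso; omega) | tauto
  rw [heq] at hu
  have hs : (a + c - 1) * (w ⟨i, Nat.lt_of_succ_lt hi⟩ + w ⟨i+1, hi⟩) ≠ 0 :=
    mul_ne_zero (by intro h; apply hac1; linear_combination h) hne
  have := W.smul_mem ((a + c - 1) * (w ⟨i, Nat.lt_of_succ_lt hi⟩ + w ⟨i+1, hi⟩))⁻¹ hu
  rwa [smul_smul, inv_mul_cancel₀ hs, one_smul] at this

lemma bs_shift {n : ℕ} (W : Submodule ℂ (Fin n → ℂ))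
    (hP : ∀ i, i < n - 1 → ∀ w ∈ W, (stdS n (1 : ℂ) i).mulVec w ∈ W)
    (m : ℕ) (hm : m + 2 < n) (hb : bsv n (m+1) ∈ W) : bsv n m ∈ W := by
  have hm1 : m + 1 < n := by omega
  have hz : (stdS n 1 m).mulVec (bsv n (m+1)) ∈ W := hP m (by omega) _ hb
  have hy : (stdS n 1 (m+1)).mulVec ((stdS n 1 m).mulVec (bsv n (m+1))) ∈ W :=
    hP (m+1) (by omega) _ hz
  have heq : (stdS n 1 (m+1)).mulVec ((stdS n 1 m).mulVec (bsv n (m+1))) = bsv n m := by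
    funext k
    simp only [stdS_mulVec (m+1) hm, stdS_mulVec m hm1, bsv, Fin.val_mk]
    split_ifs <;> first | rfl | (exfalso; omega) | tauto
  rwa [heq] at hy

lemma bs_zero {n : ℕ} (W : Submodule ℂ (Fin n → ℂ))
    (hP : ∀ i, i < n - 1 → ∀ w ∈ W, (stdS n (1 : ℂ) i).mulVec w ∈ W) :
    ∀ i, i + 1 < n → bsv n i ∈ W → bsv n 0 ∈ W := by
  intro i
  induction i with
  | zero => exact fun _ h => h
  | succ m ih => exact fun hi h => ih (by omega) (bs_shift W hP m hi h)

lemma e0_mem {n : ℕ} (hn : 3 ≤ n) (W : Submodule ℂ (Fin n → ℂ))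
    (hP : ∀ i, i < n - 1 → ∀ w ∈ W, (stdS n (1 : ℂ) i).mulVec w ∈ W)
    (hb : bsv n 0 ∈ W) : esv n 0 ∈ W := by
  have h2 : (1:ℕ) + 1 < n := by omega
  have h1 : (0:ℕ) + 1 < n := by omega
  have hu2 : (stdS n 1 1).mulVec (bsv n 0) ∈ W := hP 1 (by omega) _ hb
  have hu3 : (stdS n 1 0).mulVec ((stdS n 1 1).mulVec (bsv n 0)) ∈ W := hP 0 (by omega) _ hu2
  have hu : (bsv n 0 + (stdS n 1 1).mulVec (bsv n 0)
      - (stdS n 1 0).mulVec ((stdS n 1 1).mulVec (bsv n 0))) ∈ W :=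
    sub_mem (add_mem hb hu2) hu3
  have heq : bsv n 0 + (stdS n 1 1).mulVec (bsv n 0)
      - (stdS n 1 0).mulVec ((stdS n 1 1).mulVec (bsv n 0)) = (2:ℂ) • esv n 0 := by
    funext k
    simp only [Pi.add_apply, Pi.sub_apply, Pi.smul_apply, smul_eq_mul,
      stdS_mulVec 1 h2, stdS_mulVec 0 h1, bsv, esv, Fin.val_mk]
    split_ifs <;> first | ring1 | (exfalso; omega) | tauto
  rw [heq] at hu
  have := W.smul_mem (2:ℂ)⁻¹ hu
  rwa [smul_smul, inv_mul_cancel₀ two_ne_zero, one_smul] at this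

lemma es_step {n : ℕ} (W : Submodule ℂ (Fin n → ℂ))
    (hP : ∀ i, i < n - 1 → ∀ w ∈ W, (stdS n (1 : ℂ) i).mulVec w ∈ W)
    (j : ℕ) (hj : j + 1 < n) (he : esv n j ∈ W) : esv n (j+1) ∈ W := by
  have h := hP j (by omega) _ he
  have heq : (stdS n 1 j).mulVec (esv n j) = esv n (j+1) := by
    funext k
    simp only [stdS_mulVec j hj, esv, Fin.val_mk]
    split_ifs <;> first | rfl | (exfalso; omega)
  rwa [heq] at h

lemma es_all {n : ℕ} (hn : 3 ≤ n) (W : Submodule ℂ (Fin n → ℂ))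
    (hP : ∀ i, i < n - 1 → ∀ w ∈ W, (stdS n (1 : ℂ) i).mulVec w ∈ W)
    (hb : bsv n 0 ∈ W) : ∀ j, j < n → esv n j ∈ W := by
  intro j
  induction j with
  | zero => exact fun _ => e0_mem hn W hP hb
  | succ m ih => exact fun hj => es_step W hP m hj (ih (by omega))

lemma top_of_es {n : ℕ} (W : Submodule ℂ (Fin n → ℂ))
    (hall : ∀ j, j < n → esv n j ∈ W) : W = ⊤ := by
  rw [eq_top_iff]
  intro x _
  have hx : x = ∑ m : Fin n, x m • esv n (m:ℕ) := by
    funext k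
    rw [Finset.sum_apply]
    rw [Finset.sum_eq_single k]
    · simp [esv]
    · intro b _ hb
      simp only [esv, Pi.smul_apply, smul_eq_mul]
      rw [if_neg (fun h => hb (Fin.ext h).symm), mul_zero]
    · simp
  rw [hx]
  exact Submodule.sum_mem _ (fun m _ => W.smul_mem _ (hall m.1 m.isLt))

lemma top_of_pair {n : ℕ} (hn : 3 ≤ n) (a c : ℂ) (hac1 : a + c ≠ 1)
    (W : Submodule ℂ (Fin n → ℂ))
    (hP : ∀ i, i < n - 1 → ∀ w ∈ W, (stdS n (1 : ℂ) i).mulVec w ∈ W)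
    (hN : ∀ i, i < n - 1 → ∀ w ∈ W, (stdN n a c (1 : ℂ) i).mulVec w ∈ W)
    (w : Fin n → ℂ) (hw : w ∈ W) (i : ℕ) (hi : i + 1 < n)
    (hne : w ⟨i, Nat.lt_of_succ_lt hi⟩ + w ⟨i+1, hi⟩ ≠ 0) : W = ⊤ :=
  top_of_es W (es_all hn W hP (bs_zero W hP i hi (bs_mem a c hac1 W hP hN w hw i hi hne)))

/-- For `t = 1` and `a + c ≠ 1`, every extension of the standard representation of
`B_n` to the singular braid group `SB_n` (`n ≥ 3`) is irreducible: the only invariant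
subspaces of `ℂⁿ` are `⊥` and `⊤`.  (0-indexed generators `0 ≤ i < n - 1`.) -/
theorem irreducible_extension_at_one_of_add_ne_one (n : ℕ) (hn : 3 ≤ n)
    (a c : ℂ) (hac : a ^ 2 - c ^ 2 ≠ 0) (hac1 : a + c ≠ 1)
    (W : Submodule ℂ (Fin n → ℂ))
    (hP : ∀ i, i < n - 1 → ∀ w ∈ W, (stdS n (1 : ℂ) i).mulVec w ∈ W)
    (hN : ∀ i, i < n - 1 → ∀ w ∈ W, (stdN n a c (1 : ℂ) i).mulVec w ∈ W) :
    W = ⊥ ∨ W = ⊤ := by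
  by_cases hbot : W = ⊥
  · exact Or.inl hbot
  right
  obtain ⟨w, hw, hw0⟩ := (Submodule.ne_bot_iff W).mp hbot
  by_cases hkey : ∃ i, ∃ hi : i + 1 < n, w ⟨i, Nat.lt_of_succ_lt hi⟩ + w ⟨i+1, hi⟩ ≠ 0
  · obtain ⟨i, hi, hne⟩ := hkey
    exact top_of_pair hn a c hac1 W hP hN w hw i hi hne
  · simp only [not_exists, not_not] at hkey
    have h0 : w ⟨0, by omega⟩ ≠ 0 := by
      intro h00
      have hall0 : ∀ k, ∀ hk : k < n, w ⟨k, hk⟩ = 0 := by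
        intro k
        induction k with
        | zero => exact fun hk => h00
        | succ m ih =>
          intro hk
          have hsum := hkey m hk
          have hmm := ih (by omega)
          linear_combination hsum - hmm
      apply hw0
      funext k
      have := hall0 k.1 k.isLt
      simpa using this
    have h2n : (1:ℕ) + 1 < n := by omega
    have hw'W : (stdS n 1 1).mulVec w ∈ W := hP 1 (by omega) w hw
    have e0' : (stdS n 1 1).mulVec w ⟨0, by omega⟩ = w ⟨0, by omega⟩ := by
      rw [stdS_mulVec 1 h2n]; norm_num
    have e1' : (stdS n 1 1).mulVec w ⟨1, by omega⟩ = w ⟨2, by omega⟩ := by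
      rw [stdS_mulVec 1 h2n]; norm_num
    have key2 : (stdS n 1 1).mulVec w ⟨0, by omega⟩ + (stdS n 1 1).mulVec w ⟨1, by omega⟩ ≠ 0 := by
      rw [e0', e1']
      have hA := hkey 0 (by omega)
      have hB := hkey 1 (by omega)
      intro h
      exact h0 (by linear_combination (h + hA - hB) / 2)
    exact top_of_pair hn a c hac1 W hP hN _ hw'W 0 (by omega) key2
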